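/- Baby maser, non-existence of invariant state for λ ≥ 1/2: let αₙ = 0, βₙ = 1 for n ≥ 1 and let ψ be any state on M₂ with parameter λ ≥ 1/2. If φ is a normal state with φ ∘ T_ψ = φ, then the sequence cₙ := φ(pₙ) satisfies cₙ = λ cₙ₋₁ + (1−λ) cₙ₊₁ for all n ≥ 1; together with Σ cₙ = 1 and cₙ ≥ 0 this is impossible. Hence T_ψ has no invariant normal state for λ ≥ 1/2. -/

import Mathlib

noncomputable section
open ContinuousLinearMap

abbrev H : Type := lp (fun _ : ℕ => ℂ) 2

def e (n : ℕ) : H := lp.single 2 n 1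

lemma coord (v : H) (n : ℕ) : (inner ℂ (e n) v : ℂ) = v n := by
  simp [e, lp.inner_single_left, RCLike.inner_apply]

lemma coord' (v : H) (n : ℕ) : (inner ℂ v (e n) : ℂ) = (starRingEnd ℂ) (v n) := by
  simp [e, lp.inner_single_right, RCLike.inner_apply]

lemma e_apply (n m : ℕ) : (e n : ∀ _ : ℕ, ℂ) m = if m = n then 1 else 0 := by
  simp [e, lp.single_apply, Pi.single_apply]

def P (n : ℕ) : H →L[ℂ] H := (innerSL ℂ (e n)).smulRight (e n)

lemma P_apply (n : ℕ) (v : H) : P n v = (v n) • e n := by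
  simp [P, coord]

lemma inner_P (n : ℕ) (v : H) : (inner ℂ v (P n v) : ℂ) = ((‖v n‖ ^ 2 : ℝ) : ℂ) := by
  rw [P_apply, inner_smul_right, coord', Complex.mul_conj, Complex.normSq_eq_norm_sq]

lemma inner_quad (t : H →L[ℂ] H) (n : ℕ) (v : H) :
    (inner ℂ v ((adjoint t ∘L (P n) ∘L t) v) : ℂ) = ((‖(t v) n‖ ^ 2 : ℝ) : ℂ) := by
  rw [comp_apply, comp_apply, adjoint_inner_right, inner_P]

lemma step_neg (l d0 dk dk1 : ℝ) (hl0 : 1/2 ≤ l) (hl1 : l ≤ 1)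
    (h1 : l * dk = (1-l) * dk1) (ih : dk ≤ d0) (hneg : d0 < 0) : dk1 ≤ d0 := by
  rcases eq_or_lt_of_le hl1 with hl | hl
  · nlinarith
  · have h2 : (0:ℝ) < 1 - l := by linarith
    nlinarith [mul_le_mul_of_nonneg_left ih (by linarith : (0:ℝ) ≤ l)]
lemma step_pos (l d0 dk dk1 : ℝ) (hl0 : 1/2 ≤ l) (hl1 : l ≤ 1)
    (h1 : l * dk = (1-l) * dk1) (ih : d0 ≤ dk) (hpos : 0 < d0) : d0 ≤ dk1 := by
  rcases eq_or_lt_of_le hl1 with hl | hl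
  · nlinarith
  · have h2 : (0:ℝ) < 1 - l := by linarith
    nlinarith [mul_le_mul_of_nonneg_left ih (by linarith : (0:ℝ) ≤ l)]

set_option maxHeartbeats 2000000 in
/-- baby maser (αₙ = 0, βₙ = 1 for n ≥ 1).  For any state ψ with
parameter λ ≥ 1/2 the transition operator
T_ψ(x) = λ(t₁* x t₁ + t₂* x t₂) + (1−λ)(1−|ζ|²)(t₃* x t₃ + t₄* x t₄), with
t₁ = iζ√((1−λ)/λ) s*, t₂ = s − iζ√((1−λ)/λ) p₀, t₃ = s*, t₄ = p₀, admits no invariant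
normal state (normal states being represented as x ↦ Σₙ ⟨ξₙ, x ξₙ⟩ with Σ‖ξₙ‖² = 1). -/
theorem babymaser_no_invariant_state
    (l : ℝ) (hl0 : 1 / 2 ≤ l) (hl1 : l ≤ 1) (ζ : ℂ) (hζ : ‖ζ‖ ≤ 1)
    (s p₀ : H →L[ℂ] H)
    (hs : ∀ n, s (e n) = e (n + 1))
    (hp₀0 : p₀ (e 0) = e 0) (hp₀ : ∀ n, 1 ≤ n → p₀ (e n) = 0)
    (t₁ t₂ t₃ t₄ : H →L[ℂ] H)
    (ht₁ : t₁ = (Complex.I * ζ * ((Real.sqrt ((1 - l) / l) : ℝ) : ℂ)) • adjoint s)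
    (ht₂ : t₂ = s - (Complex.I * ζ * ((Real.sqrt ((1 - l) / l) : ℝ) : ℂ)) • p₀)
    (ht₃ : t₃ = adjoint s) (ht₄ : t₄ = p₀) :
    ¬ ∃ ξ : ℕ → H, (∑' n, ‖ξ n‖ ^ 2) = 1 ∧
      ∀ x : H →L[ℂ] H,
        (∑' n, (inner ℂ (ξ n)
          ((((l : ℂ) • (adjoint t₁ ∘L x ∘L t₁ + adjoint t₂ ∘L x ∘L t₂)
            + (((1 - l) * (1 - ‖ζ‖ ^ 2) : ℝ) : ℂ) •
                (adjoint t₃ ∘L x ∘L t₃ + adjoint t₄ ∘L x ∘L t₄))) (ξ n)) : ℂ))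
        = ∑' n, (inner ℂ (ξ n) (x (ξ n)) : ℂ) := by
  rintro ⟨ξ, hξnorm, hinv⟩
  have hlpos : (0:ℝ) < l := by linarith
  set μ : ℂ := Complex.I * ζ * ((Real.sqrt ((1 - l) / l) : ℝ) : ℂ) with hμ
  have hμ2 : ‖μ‖ ^ 2 = ‖ζ‖ ^ 2 * ((1 - l) / l) := by
    have h1 : (0:ℝ) ≤ (1 - l) / l := by
      apply div_nonneg <;> linarith
    rw [hμ, norm_mul, norm_mul, Complex.norm_I, one_mul, mul_pow, Complex.norm_real,
      Real.norm_eq_abs, abs_of_nonneg (Real.sqrt_nonneg _), Real.sq_sqrt h1]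
  -- coordinate lemmas
  have hadj_s : ∀ (v : H) n, ((adjoint s) v) n = v (n + 1) := by
    intro v n
    rw [← coord, adjoint_inner_right, hs, coord]
  have hsstar : ∀ n, adjoint s (e (n + 1)) = e n := by
    intro n
    apply lp.ext; funext m
    rw [hadj_s (e (n + 1)) m, e_apply, e_apply]
    by_cases h : m = n <;> simp [h]
  have hsv : ∀ (v : H) n, (s v) (n + 1) = v n := by
    intro v n
    rw [← coord, ← adjoint_inner_left, hsstar, coord]
  have hp₀star : ∀ n, adjoint p₀ (e (n + 1)) = 0 := by
    intro n
    apply lp.ext; funext m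
    have h : ((adjoint p₀) (e (n + 1))) m = (inner ℂ (p₀ (e m)) (e (n + 1)) : ℂ) := by
      rw [← coord, adjoint_inner_right]
    rw [h]
    rcases Nat.eq_zero_or_pos m with hm | hm
    · subst hm
      rw [hp₀0, coord, e_apply]
      simp
    · rw [hp₀ m hm]
      simp
  have hp₀v : ∀ (v : H) n, (p₀ v) (n + 1) = 0 := by
    intro v n
    rw [← coord, ← adjoint_inner_left, hp₀star]
    simp
  -- the key quadratic identity
  have key : ∀ (m : ℕ) (v : H),
      (inner ℂ v ((((l : ℂ) • (adjoint t₁ ∘L P (m+1) ∘L t₁ + adjoint t₂ ∘L P (m+1) ∘L t₂)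
            + (((1 - l) * (1 - ‖ζ‖ ^ 2) : ℝ) : ℂ) •
                (adjoint t₃ ∘L P (m+1) ∘L t₃ + adjoint t₄ ∘L P (m+1) ∘L t₄))) v) : ℂ)
        = ((l * ‖v m‖ ^ 2 + (1 - l) * ‖v (m+2)‖ ^ 2 : ℝ) : ℂ) := by
    intro m v
    have c1 : (t₁ v) (m+1) = μ * v (m+2) := by
      rw [ht₁]
      simp only [smul_apply, lp.coeFn_smul, Pi.smul_apply, smul_eq_mul]
      rw [hadj_s]
    have c2 : (t₂ v) (m+1) = v m := by
      rw [ht₂]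
      simp only [sub_apply, smul_apply, lp.coeFn_sub, Pi.sub_apply, lp.coeFn_smul,
        Pi.smul_apply, smul_eq_mul]
      rw [hsv, hp₀v, mul_zero, sub_zero]
    have c3 : (t₃ v) (m+1) = v (m+2) := by
      rw [ht₃, hadj_s]
    have c4 : (t₄ v) (m+1) = 0 := by
      rw [ht₄, hp₀v]
    rw [add_apply, smul_apply, smul_apply, add_apply, add_apply,
      inner_add_right, inner_smul_right, inner_smul_right,
      inner_add_right, inner_add_right,
      inner_quad, inner_quad, inner_quad, inner_quad, c1, c2, c3, c4]
    have h5 : ‖μ * v (m+2)‖ ^ 2 = ‖ζ‖ ^ 2 * ((1 - l) / l) * ‖v (m+2)‖ ^ 2 := by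
      rw [norm_mul, mul_pow, hμ2]
    rw [h5]
    have hl0' : (l : ℂ) ≠ 0 := by
      exact_mod_cast ne_of_gt hlpos
    push_cast
    simp only [norm_zero, Complex.ofReal_zero]
    field_simp
    ring
  -- summability facts
  have hsummable : Summable (fun k => ‖ξ k‖ ^ 2) := by
    by_contra h
    rw [tsum_eq_zero_of_not_summable h] at hξnorm
    norm_num at hξnorm
  have hcoordle : ∀ k n, ‖(ξ k) n‖ ^ 2 ≤ ‖ξ k‖ ^ 2 := by
    intro k n
    have := lp.norm_apply_le_norm (by norm_num : (2 : ENNReal) ≠ 0) (ξ k) n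
    exact pow_le_pow_left₀ (norm_nonneg _) this 2
  have hA : ∀ n, Summable (fun k => ‖(ξ k) n‖ ^ 2) :=
    fun n => Summable.of_nonneg_of_le (fun k => by positivity) (fun k => hcoordle k n) hsummable
  -- recursion for the diagonal sequence
  obtain ⟨c, hc⟩ : ∃ c : ℕ → ℝ, ∀ n, c n = ∑' k, ‖(ξ k) n‖ ^ 2 := ⟨_, fun _ => rfl⟩
  have hrecC : ∀ m, l * c m + (1 - l) * c (m + 2) = c (m + 1) := by
    intro m
    have h := hinv (P (m + 1))
    rw [tsum_congr (fun k => key m (ξ k)), tsum_congr (fun k => inner_P (m + 1) (ξ k)),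
      ← Complex.ofReal_tsum, ← Complex.ofReal_tsum] at h
    have h' : (∑' k, (l * ‖(ξ k) m‖ ^ 2 + (1 - l) * ‖(ξ k) (m + 2)‖ ^ 2))
        = ∑' k, ‖(ξ k) (m + 1)‖ ^ 2 := by
      exact_mod_cast h
    rw [Summable.tsum_add ((hA m).mul_left l) ((hA (m + 2)).mul_left (1 - l)),
      tsum_mul_left, tsum_mul_left] at h'
    rw [hc m, hc (m + 1), hc (m + 2)]
    exact h'
  have hcnonneg : ∀ n, 0 ≤ c n := by
    intro n; rw [hc n]; exact tsum_nonneg fun k => by positivity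
  -- partial sums bounded by 1
  have hhs : ∀ k, HasSum (fun n => ‖(ξ k) n‖ ^ 2) (‖ξ k‖ ^ 2) := by
    intro k
    have h2 : ((2 : ENNReal)).toReal = 2 := by norm_num
    have := lp.hasSum_norm (p := 2) (by norm_num) (ξ k)
    rw [h2] at this
    have hr : ∀ x : ℝ, 0 ≤ x → x ^ (2:ℝ) = x ^ 2 := by
      intro x hx
      rw [show (2:ℝ) = ((2:ℕ):ℝ) by norm_num, Real.rpow_natCast]
    convert this using 2 with n
    · rw [hr _ (norm_nonneg _)]
    · rw [hr _ (norm_nonneg _)]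
  have hpartial : ∀ N : ℕ, ∑ n ∈ Finset.range N, c n ≤ 1 := by
    intro N
    rw [← hξnorm]
    have h1 : ∑ n ∈ Finset.range N, c n = ∑' k, ∑ n ∈ Finset.range N, ‖(ξ k) n‖ ^ 2 := by
      rw [Summable.tsum_finsetSum (fun n _ => hA n)]
      exact Finset.sum_congr rfl fun n _ => hc n
    rw [h1]
    apply Summable.tsum_le_tsum _ (summable_sum fun n _ => hA n) hsummable
    intro k
    exact sum_le_hasSum _ (fun n _ => by positivity) (hhs k)
  have hcle1 : ∀ n, c n ≤ 1 := by
    intro n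
    have h := hpartial (n + 1)
    have h2 : c n ≤ ∑ m ∈ Finset.range (n + 1), c m :=
      Finset.single_le_sum (fun m _ => hcnonneg m) (Finset.self_mem_range_succ n)
    linarith
  -- difference recursion
  have hrecd : ∀ m, l * (c (m+1) - c m) = (1 - l) * (c (m+2) - c (m+1)) := by
    intro m
    linear_combination - hrecC m
  -- telescoping
  have htel : ∀ N, c N = c 0 + ∑ m ∈ Finset.range N, (c (m+1) - c m) := by
    intro N
    rw [Finset.sum_range_sub]
    ring
  -- d 0 = 0
  have hd0 : c 1 - c 0 = 0 := by
    by_contra h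
    rcases lt_or_gt_of_ne h with hneg | hpos
    · -- d 0 < 0 : c eventually negative
      have hmono : ∀ m, c (m+1) - c m ≤ c 1 - c 0 := by
        intro m
        induction m with
        | zero => exact le_refl _
        | succ k ih =>
          exact step_neg l _ _ _ hl0 hl1 (hrecd k) ih hneg
      obtain ⟨N, hN⟩ := exists_nat_gt (2 / (-(c 1 - c 0)))
      have hsum : ∑ m ∈ Finset.range N, (c (m+1) - c m) ≤ N * (c 1 - c 0) := by
        have := Finset.sum_le_card_nsmul (Finset.range N) _ (c 1 - c 0)
          (fun m _ => hmono m)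
        simpa [nsmul_eq_mul] using this
      have hcN := htel N
      have h0 : (0:ℝ) < -(c 1 - c 0) := by linarith
      have hN2 : 2 < (N:ℝ) * (-(c 1 - c 0)) := by
        rw [div_lt_iff₀ h0] at hN
        linarith
      have hN3 : (N:ℝ) * (c 1 - c 0) < -2 := by
        rw [mul_neg] at hN2
        linarith
      linarith [hcN, hsum, hN3, hcnonneg N, hcle1 0]
    · -- d 0 > 0 : c unbounded
      have hmono : ∀ m, c 1 - c 0 ≤ c (m+1) - c m := by
        intro m
        induction m with
        | zero => exact le_refl _
        | succ k ih =>
          exact step_pos l _ _ _ hl0 hl1 (hrecd k) ih hpos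
      obtain ⟨N, hN⟩ := exists_nat_gt (2 / (c 1 - c 0))
      have hsum : N * (c 1 - c 0) ≤ ∑ m ∈ Finset.range N, (c (m+1) - c m) := by
        have := Finset.card_nsmul_le_sum (Finset.range N) _ (c 1 - c 0)
          (fun m _ => hmono m)
        simpa [nsmul_eq_mul] using this
      have hcN := htel N
      have hN2 : 2 < (N:ℝ) * (c 1 - c 0) := by
        rw [div_lt_iff₀ hpos] at hN
        linarith
      linarith [hcN, hsum, hN2, hcle1 N, hcnonneg 0]
  -- all differences vanish
  have hdall : ∀ m, c (m+1) - c m = 0 := by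
    rcases lt_or_eq_of_le hl1 with hl | hl
    · intro m
      induction m with
      | zero => exact hd0
      | succ k ih =>
        have h1 := hrecd k
        rw [ih, mul_zero] at h1
        have h2 : (1:ℝ) - l ≠ 0 := by linarith
        have := (mul_eq_zero.mp h1.symm).resolve_left h2
        exact this
    · intro m
      have h1 := hrecd m
      rw [hl] at h1
      linarith
  have hconst : ∀ n, c n = c 0 := by
    intro n
    induction n with
    | zero => rfl
    | succ k ih =>
      have := hdall k
      linarith
  -- c 0 = 0
  have hc00 : c 0 = 0 := by
    by_contra h
    have hpos : 0 < c 0 := lt_of_le_of_ne (hcnonneg 0) (Ne.symm h)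
    obtain ⟨N, hN⟩ := exists_nat_gt (2 / c 0)
    have hsum : ∑ n ∈ Finset.range N, c n = N * c 0 := by
      rw [Finset.sum_congr rfl fun n _ => hconst n]
      simp [Finset.sum_const, nsmul_eq_mul]
    have h1 := hpartial N
    rw [hsum] at h1
    rw [div_lt_iff₀ hpos] at hN
    linarith
  -- all ξ are zero : contradiction with total mass 1
  have hxi : ∀ k n, (ξ k) n = 0 := by
    intro k n
    have h1 : ‖(ξ k) n‖ ^ 2 ≤ c n := by
      rw [hc n]
      exact Summable.le_tsum (hA n) k fun m _ => by positivity
    have h2 : c n = 0 := by rw [hconst n, hc00]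
    have h3 : ‖(ξ k) n‖ ^ 2 = 0 := le_antisymm (h2 ▸ h1) (by positivity)
    have : ‖(ξ k) n‖ = 0 := by
      nlinarith [norm_nonneg ((ξ k) n)]
    exact norm_eq_zero.mp this
  have hzero : ∀ k, ξ k = 0 := by
    intro k
    apply lp.ext; funext n
    exact hxi k n
  rw [tsum_congr fun k => by rw [hzero k]] at hξnorm
  simp at hξnorm
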